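/- Let X be a BMC with initial distribution ν and suppose νQ^{k₀} has a density ν₀ with respect to the Q-invariant probability measure μ with ‖ν₀‖_∞ < ∞. Then there is a finite constant C such that for all non-negative measurable f and all n ≥ k₀: (i) 2^{-n} E[M_{G_n}(f)] ≤ C ‖f‖_{L¹(μ)}, and (ii) 2^{-n} E[M_{G_n}(f)²] ≤ C Σ_{k=0}^{n} 2^k ‖Q^k f‖²_{L²(μ)}. -/

import Mathlib

open MeasureTheory ProbabilityTheory ENNReal Filter

noncomputable section

/-- Nodes of the full binary tree: a node of generation `n` is a word
`Fin n → Bool`. -/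
abbrev TreeNode : Type := Σ n : ℕ, (Fin n → Bool)

/-- The root `∅` of the binary tree. -/
def rootNode : TreeNode := ⟨0, fun i => i.elim0⟩

/-- The child of the node `i` of generation `k` obtained by appending bit `b`. -/
def childNode {k : ℕ} (i : Fin k → Bool) (b : Bool) : TreeNode := ⟨k + 1, Fin.snoc i b⟩

/-- The action of the marginal mixture kernel `Q = (P₀ + P₁)/2` on real functions. -/
def QR {S : Type*} [MeasurableSpace S] (P : Kernel S (S × S)) (f : S → ℝ) (x : S) : ℝ :=
  (∫ yz, f yz.1 ∂(P x) + ∫ yz, f yz.2 ∂(P x)) / 2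

/-- `n`-th iterate of `Q` acting on real functions. -/
def QRiter {S : Type*} [MeasurableSpace S] (P : Kernel S (S × S)) (n : ℕ) (f : S → ℝ) : S → ℝ :=
  (QR P)^[n] f

/-- `X` is a bifurcating Markov chain on `S` with kernel `P`, on the probability
space `(Ω, m)`: every `X_i` is measurable and the branching Markov property
holds, expressed by integrating bounded measurable functionals of the tree up to
generation `k` against products over generation `k` of functions of
`(X_i, X_{i0}, X_{i1})`. -/
def IsBMC {S Ω : Type*} [MeasurableSpace S] [MeasurableSpace Ω] (m : Measure Ω)
    (P : Kernel S (S × S)) (X : TreeNode → Ω → S) : Prop :=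
  (∀ p : TreeNode, Measurable (X p)) ∧
  ∀ (k : ℕ) (g : (Fin k → Bool) → S → S → S → ℝ),
    (∀ i, Measurable fun p : S × S × S => g i p.1 p.2.1 p.2.2) →
    (∀ i, ∃ C, ∀ a b c, |g i a b c| ≤ C) →
    ∀ F : ({p : TreeNode // p.1 ≤ k} → S) → ℝ,
      Measurable F → (∃ C, ∀ v, |F v| ≤ C) →
      ∫ ω, (∏ i : Fin k → Bool,
          g i (X ⟨k, i⟩ ω) (X (childNode i false) ω) (X (childNode i true) ω))
          * F (fun p => X p.1 ω) ∂m
      = ∫ ω, (∏ i : Fin k → Bool,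
          ∫ yz, g i (X ⟨k, i⟩ ω) yz.1 yz.2 ∂(P (X ⟨k, i⟩ ω)))
          * F (fun p => X p.1 ω) ∂m

/-- The action of `Q = (P₀ + P₁)/2` on non-negative functions. -/
def QL {S : Type*} [MeasurableSpace S] (P : Kernel S (S × S)) (f : S → ℝ≥0∞) (x : S) : ℝ≥0∞ :=
  (∫⁻ yz, f yz.1 ∂(P x) + ∫⁻ yz, f yz.2 ∂(P x)) / 2

/-- `μ` is invariant for `Q = (P₀ + P₁)/2`. -/
def QInvariant {S : Type*} [MeasurableSpace S] (P : Kernel S (S × S)) (μ : Measure S) : Prop :=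
  ∀ f : S → ℝ≥0∞, Measurable f → ∫⁻ x, QL P f x ∂μ = ∫⁻ x, f x ∂μ

lemma iSup_min_natCast (a : ℝ≥0∞) : ⨆ n : ℕ, min a (n : ℝ≥0∞) = a := by
  have h : a ⊓ (⨆ n : ℕ, (n : ℝ≥0∞)) = ⨆ n : ℕ, a ⊓ (n : ℝ≥0∞) := inf_iSup_eq a _
  rw [ENNReal.iSup_natCast, inf_top_eq] at h
  simpa using h.symm

lemma iSup_mul_mono {a b : ℕ → ℝ≥0∞} (ha : Monotone a) (hb : Monotone b) :
    ⨆ n, a n * b n = (⨆ n, a n) * ⨆ n, b n := by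
  refine le_antisymm (iSup_le fun n => mul_le_mul' (le_iSup a n) (le_iSup b n)) ?_
  rw [ENNReal.iSup_mul]
  refine iSup_le fun i => ?_
  rw [ENNReal.mul_iSup]
  refine iSup_le fun j => ?_
  calc a i * b j ≤ a (max i j) * b (max i j) :=
        mul_le_mul' (ha (le_max_left _ _)) (hb (le_max_right _ _))
    _ ≤ ⨆ n, a n * b n := le_iSup (fun n => a n * b n) (max i j)

section AuxBMC
variable {S Ω : Type*} [MeasurableSpace S] [MeasurableSpace Ω]
  {m : Measure Ω} [IsProbabilityMeasure m] {P : Kernel S (S × S)} [IsMarkovKernel P]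
  {X : TreeNode → Ω → S}

lemma ql_meas {f : S → ℝ≥0∞} (hf : Measurable f) : Measurable (QL P f) := by
  unfold QL
  exact (((hf.comp measurable_fst).lintegral_kernel).add
    ((hf.comp measurable_snd).lintegral_kernel)).div measurable_const

lemma ql_iter_meas {f : S → ℝ≥0∞} (hf : Measurable f) : ∀ k, Measurable ((QL P)^[k] f) := by
  intro k
  induction k with
  | zero => simpa
  | succ k ih => rw [Function.iterate_succ_apply']; exact ql_meas ih

lemma lint_pair_add {f : S → ℝ≥0∞} (hf : Measurable f) (x : S) :
    ∫⁻ yz, (f yz.1 + f yz.2) ∂(P x) = 2 * QL P f x := by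
  rw [lintegral_add_left (show Measurable fun yz : S × S => f yz.1 from hf.comp measurable_fst)]
  unfold QL
  exact (ENNReal.mul_div_cancel two_ne_zero ENNReal.ofNat_ne_top).symm

lemma add_sq_le4 (a b : ℝ≥0∞) : (a + b) ^ 2 ≤ 4 * (a ^ 2 + b ^ 2) := by
  have h1 : a + b ≤ 2 * max a b := by
    rw [two_mul]; exact add_le_add (le_max_left a b) (le_max_right a b)
  calc (a + b) ^ 2 ≤ (2 * max a b) ^ 2 := by gcongr
    _ = 4 * (max a b) ^ 2 := by rw [mul_pow]; norm_num
    _ ≤ 4 * (a ^ 2 + b ^ 2) := by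
        refine mul_le_mul' le_rfl ?_
        rcases max_choice a b with h | h <;> rw [h]
        · exact self_le_add_right _ _
        · exact self_le_add_left _ _

lemma mul_le_sq_add_sq (a b : ℝ≥0∞) : a * b ≤ a ^ 2 + b ^ 2 := by
  rcases le_total a b with h | h
  · calc a * b ≤ b * b := mul_le_mul_left h b
      _ = b ^ 2 := (sq b).symm
      _ ≤ a ^ 2 + b ^ 2 := self_le_add_left _ _
  · calc a * b ≤ a * a := mul_le_mul_right h a
      _ = a ^ 2 := (sq a).symm
      _ ≤ a ^ 2 + b ^ 2 := self_le_add_right _ _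

lemma sq_sum_le {ι : Type*} [Fintype ι] (a : ι → ℝ≥0∞) :
    (∑ i, a i) ^ 2 ≤ (2 * Fintype.card ι) * ∑ i, a i ^ 2 := by
  rw [sq, Finset.sum_mul_sum]
  calc (∑ i, ∑ j, a i * a j) ≤ ∑ i : ι, ∑ j : ι, (a i ^ 2 + a j ^ 2) := by
        gcongr with i _ j _; exact mul_le_sq_add_sq _ _
    _ = (2 * Fintype.card ι) * ∑ i, a i ^ 2 := by
        simp only [Finset.sum_add_distrib, Finset.sum_const, Finset.card_univ, nsmul_eq_mul]
        rw [Finset.mul_sum, two_mul, add_mul, Finset.mul_sum]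


lemma min_mono_nat (a : ℝ≥0∞) : Monotone fun N : ℕ => min a (N : ℝ≥0∞) :=
  fun i j hij => min_le_min le_rfl (Nat.cast_le.mpr hij)

lemma bmc_single (hX : IsBMC m P X) {k : ℕ} (i₀ : Fin k → Bool)
    {F : S × S → ℝ≥0∞} (hF : Measurable F) :
    ∫⁻ ω, F (X (childNode i₀ false) ω, X (childNode i₀ true) ω) ∂m
      = ∫⁻ ω, ∫⁻ yz, F yz ∂(P (X ⟨k, i₀⟩ ω)) ∂m := by
  obtain ⟨hXm, hbmc⟩ := hX
  have hFpm : Measurable fun ω => F (X (childNode i₀ false) ω, X (childNode i₀ true) ω) :=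
    hF.comp ((hXm _).prodMk (hXm _))
  have hinner_meas : ∀ N : ℕ,
      Measurable fun ω => ∫⁻ yz, min (F yz) (N : ℝ≥0∞) ∂(P (X ⟨k, i₀⟩ ω)) :=
    fun N => ((hF.min measurable_const).lintegral_kernel).comp (hXm _)
  have hinner_le : ∀ (N : ℕ) (x : S), ∫⁻ yz, min (F yz) (N : ℝ≥0∞) ∂(P x) ≤ (N : ℝ≥0∞) := by
    intro N x
    refine le_trans (lintegral_mono fun yz => min_le_right _ _) ?_
    simp [lintegral_const]
  have key : ∀ N : ℕ,
      ∫⁻ ω, min (F (X (childNode i₀ false) ω, X (childNode i₀ true) ω)) (N : ℝ≥0∞) ∂m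
        = ∫⁻ ω, ∫⁻ yz, min (F yz) (N : ℝ≥0∞) ∂(P (X ⟨k, i₀⟩ ω)) ∂m := by
    intro N
    set g : (Fin k → Bool) → S → S → S → ℝ :=
      fun i _ b c => if i = i₀ then (min (F (b, c)) (N : ℝ≥0∞)).toReal else 1 with hg
    have hgm : ∀ i, Measurable fun p : S × S × S => g i p.1 p.2.1 p.2.2 := by
      intro i
      by_cases h : i = i₀
      · simp only [hg, h, if_true]
        exact ENNReal.measurable_toReal.comp
          ((hF.comp (measurable_snd.fst.prodMk measurable_snd.snd)).min measurable_const)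
      · simp only [hg, h, if_false]; exact measurable_const
    have hgb : ∀ i, ∃ C, ∀ a b c, |g i a b c| ≤ C := by
      intro i
      refine ⟨(N : ℝ) + 1, fun a b c => ?_⟩
      have hN : (0 : ℝ) ≤ N := Nat.cast_nonneg N
      by_cases h : i = i₀
      · simp only [hg, h, if_true, abs_of_nonneg ENNReal.toReal_nonneg]
        calc (min (F (b, c)) (N : ℝ≥0∞)).toReal
            ≤ ((N : ℝ≥0∞)).toReal :=
              ENNReal.toReal_mono (ENNReal.natCast_ne_top N) (min_le_right _ _)
          _ ≤ (N : ℝ) + 1 := by simp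
      · simp only [hg, h, if_false, abs_one]; linarith
    have h1 := hbmc k g hgm hgb (fun _ => 1) measurable_const ⟨1, fun _ => by norm_num⟩
    simp only [mul_one] at h1
    have hL : ∀ ω, (∏ i : Fin k → Bool,
        g i (X ⟨k, i⟩ ω) (X (childNode i false) ω) (X (childNode i true) ω))
        = (min (F (X (childNode i₀ false) ω, X (childNode i₀ true) ω)) (N : ℝ≥0∞)).toReal := by
      intro ω
      rw [Finset.prod_eq_single i₀ (fun b _ hb => by simp [hg, hb])
        (fun h => absurd (Finset.mem_univ i₀) h)]
      simp [hg]
    have hR : ∀ ω, (∏ i : Fin k → Bool,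
        ∫ yz, g i (X ⟨k, i⟩ ω) yz.1 yz.2 ∂(P (X ⟨k, i⟩ ω)))
        = ∫ yz, (min (F yz) (N : ℝ≥0∞)).toReal ∂(P (X ⟨k, i₀⟩ ω)) := by
      intro ω
      rw [Finset.prod_eq_single i₀ (fun b _ hb => by simp [hg, hb])
        (fun h => absurd (Finset.mem_univ i₀) h)]
      simp [hg]
    simp only [hL, hR] at h1
    have e1 : ∫ ω, (min (F (X (childNode i₀ false) ω, X (childNode i₀ true) ω))
        (N : ℝ≥0∞)).toReal ∂m
        = (∫⁻ ω, min (F (X (childNode i₀ false) ω, X (childNode i₀ true) ω)) (N : ℝ≥0∞) ∂m).toReal :=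
      integral_toReal (hFpm.min measurable_const).aemeasurable
        (ae_of_all _ fun ω => lt_of_le_of_lt (min_le_right _ _) (ENNReal.natCast_lt_top N))
    have e2 : ∀ x : S, ∫ yz, (min (F yz) (N : ℝ≥0∞)).toReal ∂(P x)
        = (∫⁻ yz, min (F yz) (N : ℝ≥0∞) ∂(P x)).toReal := fun x =>
      integral_toReal (hF.min measurable_const).aemeasurable
        (ae_of_all _ fun yz => lt_of_le_of_lt (min_le_right _ _) (ENNReal.natCast_lt_top N))
    have e3 : ∫ ω, (∫⁻ yz, min (F yz) (N : ℝ≥0∞) ∂(P (X ⟨k, i₀⟩ ω))).toReal ∂m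
        = (∫⁻ ω, ∫⁻ yz, min (F yz) (N : ℝ≥0∞) ∂(P (X ⟨k, i₀⟩ ω)) ∂m).toReal :=
      integral_toReal (hinner_meas N).aemeasurable
        (ae_of_all _ fun ω => lt_of_le_of_lt (hinner_le N _) (ENNReal.natCast_lt_top N))
    rw [e1] at h1
    simp only [e2] at h1
    rw [e3] at h1
    have hfin1 : ∫⁻ ω, min (F (X (childNode i₀ false) ω, X (childNode i₀ true) ω))
        (N : ℝ≥0∞) ∂m ≠ ⊤ := by
      refine ne_of_lt (lt_of_le_of_lt (lintegral_mono fun ω => min_le_right _ _) ?_)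
      simpa [lintegral_const] using ENNReal.natCast_lt_top N
    have hfin2 : ∫⁻ ω, ∫⁻ yz, min (F yz) (N : ℝ≥0∞) ∂(P (X ⟨k, i₀⟩ ω)) ∂m ≠ ⊤ := by
      refine ne_of_lt (lt_of_le_of_lt (lintegral_mono fun ω => hinner_le N _) ?_)
      simpa [lintegral_const] using ENNReal.natCast_lt_top N
    exact (ENNReal.toReal_eq_toReal_iff' hfin1 hfin2).mp h1
  calc ∫⁻ ω, F (X (childNode i₀ false) ω, X (childNode i₀ true) ω) ∂m
      = ∫⁻ ω, ⨆ N : ℕ, min (F (X (childNode i₀ false) ω, X (childNode i₀ true) ω)) (N : ℝ≥0∞) ∂m := by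
        simp_rw [iSup_min_natCast]
    _ = ⨆ N : ℕ, ∫⁻ ω, min (F (X (childNode i₀ false) ω, X (childNode i₀ true) ω)) (N : ℝ≥0∞) ∂m :=
        lintegral_iSup (fun N => hFpm.min measurable_const)
          (fun i j hij ω => min_mono_nat _ hij)
    _ = ⨆ N : ℕ, ∫⁻ ω, ∫⁻ yz, min (F yz) (N : ℝ≥0∞) ∂(P (X ⟨k, i₀⟩ ω)) ∂m := by
        simp_rw [key]
    _ = ∫⁻ ω, ⨆ N : ℕ, ∫⁻ yz, min (F yz) (N : ℝ≥0∞) ∂(P (X ⟨k, i₀⟩ ω)) ∂m :=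
        (lintegral_iSup hinner_meas
          (fun i j hij ω => lintegral_mono fun yz => min_mono_nat _ hij)).symm
    _ = ∫⁻ ω, ∫⁻ yz, F yz ∂(P (X ⟨k, i₀⟩ ω)) ∂m := by
        refine lintegral_congr fun ω => ?_
        rw [← lintegral_iSup (fun N => hF.min measurable_const)
          (fun i j hij yz => min_mono_nat _ hij)]
        simp_rw [iSup_min_natCast]

lemma bmc_pair (hX : IsBMC m P X) {k : ℕ} {i₀ j₀ : Fin k → Bool} (hne : i₀ ≠ j₀)
    {F G : S × S → ℝ≥0∞} (hF : Measurable F) (hG : Measurable G) :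
    ∫⁻ ω, F (X (childNode i₀ false) ω, X (childNode i₀ true) ω)
        * G (X (childNode j₀ false) ω, X (childNode j₀ true) ω) ∂m
      = ∫⁻ ω, (∫⁻ yz, F yz ∂(P (X ⟨k, i₀⟩ ω))) * (∫⁻ yz, G yz ∂(P (X ⟨k, j₀⟩ ω))) ∂m := by
  obtain ⟨hXm, hbmc⟩ := hX
  have hFpm : Measurable fun ω => F (X (childNode i₀ false) ω, X (childNode i₀ true) ω) :=
    hF.comp ((hXm _).prodMk (hXm _))
  have hGpm : Measurable fun ω => G (X (childNode j₀ false) ω, X (childNode j₀ true) ω) :=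
    hG.comp ((hXm _).prodMk (hXm _))
  have hinner_measF : ∀ N : ℕ,
      Measurable fun ω => ∫⁻ yz, min (F yz) (N : ℝ≥0∞) ∂(P (X ⟨k, i₀⟩ ω)) :=
    fun N => ((hF.min measurable_const).lintegral_kernel).comp (hXm _)
  have hinner_measG : ∀ N : ℕ,
      Measurable fun ω => ∫⁻ yz, min (G yz) (N : ℝ≥0∞) ∂(P (X ⟨k, j₀⟩ ω)) :=
    fun N => ((hG.min measurable_const).lintegral_kernel).comp (hXm _)
  have hinner_le : ∀ (H : S × S → ℝ≥0∞) (N : ℕ) (x : S),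
      ∫⁻ yz, min (H yz) (N : ℝ≥0∞) ∂(P x) ≤ (N : ℝ≥0∞) := by
    intro H N x
    refine le_trans (lintegral_mono fun yz => min_le_right _ _) ?_
    simp [lintegral_const]
  have hprod : ∀ v : (Fin k → Bool) → ℝ, (∀ i, i ≠ i₀ → i ≠ j₀ → v i = 1) →
      ∏ i, v i = v i₀ * v j₀ := by
    intro v hv
    rw [← Finset.prod_pair hne]
    refine (Finset.prod_subset (Finset.subset_univ _) fun x _ hx => ?_).symm
    simp only [Finset.mem_insert, Finset.mem_singleton] at hx
    push_neg at hx
    exact hv x hx.1 hx.2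
  have key : ∀ N : ℕ,
      ∫⁻ ω, min (F (X (childNode i₀ false) ω, X (childNode i₀ true) ω)) (N : ℝ≥0∞)
          * min (G (X (childNode j₀ false) ω, X (childNode j₀ true) ω)) (N : ℝ≥0∞) ∂m
        = ∫⁻ ω, (∫⁻ yz, min (F yz) (N : ℝ≥0∞) ∂(P (X ⟨k, i₀⟩ ω)))
            * (∫⁻ yz, min (G yz) (N : ℝ≥0∞) ∂(P (X ⟨k, j₀⟩ ω))) ∂m := by
    intro N
    set g : (Fin k → Bool) → S → S → S → ℝ :=
      fun i _ b c => if i = i₀ then (min (F (b, c)) (N : ℝ≥0∞)).toReal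
        else if i = j₀ then (min (G (b, c)) (N : ℝ≥0∞)).toReal else 1 with hg
    have hgm : ∀ i, Measurable fun p : S × S × S => g i p.1 p.2.1 p.2.2 := by
      intro i
      by_cases h : i = i₀
      · simp only [hg, h, if_true]
        exact ENNReal.measurable_toReal.comp
          ((hF.comp (measurable_snd.fst.prodMk measurable_snd.snd)).min measurable_const)
      · by_cases h' : i = j₀
        · subst h'
          simp only [hg, if_neg (Ne.symm hne), if_pos rfl]
          exact ENNReal.measurable_toReal.comp
            ((hG.comp (measurable_snd.fst.prodMk measurable_snd.snd)).min measurable_const)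
        · simp only [hg, h, h', if_false]; exact measurable_const
    have hgb : ∀ i, ∃ C, ∀ a b c, |g i a b c| ≤ C := by
      intro i
      refine ⟨(N : ℝ) + 1, fun a b c => ?_⟩
      have hN : (0 : ℝ) ≤ N := Nat.cast_nonneg N
      by_cases h : i = i₀
      · simp only [hg, h, if_true, abs_of_nonneg ENNReal.toReal_nonneg]
        calc (min (F (b, c)) (N : ℝ≥0∞)).toReal
            ≤ ((N : ℝ≥0∞)).toReal :=
              ENNReal.toReal_mono (ENNReal.natCast_ne_top N) (min_le_right _ _)
          _ ≤ (N : ℝ) + 1 := by simp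
      · by_cases h' : i = j₀
        · subst h'
          simp only [hg, if_neg (Ne.symm hne), eq_self_iff_true, if_true,
            abs_of_nonneg ENNReal.toReal_nonneg]
          calc (min (G (b, c)) (N : ℝ≥0∞)).toReal
              ≤ ((N : ℝ≥0∞)).toReal :=
                ENNReal.toReal_mono (ENNReal.natCast_ne_top N) (min_le_right _ _)
            _ ≤ (N : ℝ) + 1 := by simp
        · simp only [hg, h, h', if_false, abs_one]; linarith
    have h1 := hbmc k g hgm hgb (fun _ => 1) measurable_const ⟨1, fun _ => by norm_num⟩
    simp only [mul_one] at h1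
    have hL : ∀ ω, (∏ i : Fin k → Bool,
        g i (X ⟨k, i⟩ ω) (X (childNode i false) ω) (X (childNode i true) ω))
        = (min (F (X (childNode i₀ false) ω, X (childNode i₀ true) ω)) (N : ℝ≥0∞)).toReal
          * (min (G (X (childNode j₀ false) ω, X (childNode j₀ true) ω)) (N : ℝ≥0∞)).toReal := by
      intro ω
      rw [hprod _ (fun i hi hj => by simp [hg, hi, hj])]
      simp [hg, hne, Ne.symm hne]
    have hR : ∀ ω, (∏ i : Fin k → Bool,
        ∫ yz, g i (X ⟨k, i⟩ ω) yz.1 yz.2 ∂(P (X ⟨k, i⟩ ω)))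
        = (∫ yz, (min (F yz) (N : ℝ≥0∞)).toReal ∂(P (X ⟨k, i₀⟩ ω)))
          * (∫ yz, (min (G yz) (N : ℝ≥0∞)).toReal ∂(P (X ⟨k, j₀⟩ ω))) := by
      intro ω
      rw [hprod _ (fun i hi hj => by simp [hg, hi, hj])]
      simp [hg, hne, Ne.symm hne]
    simp only [hL, hR] at h1
    have e2 : ∀ (H : S × S → ℝ≥0∞), Measurable H → ∀ x : S,
        ∫ yz, (min (H yz) (N : ℝ≥0∞)).toReal ∂(P x)
        = (∫⁻ yz, min (H yz) (N : ℝ≥0∞) ∂(P x)).toReal := fun H hH x =>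
      integral_toReal (hH.min measurable_const).aemeasurable
        (ae_of_all _ fun yz => lt_of_le_of_lt (min_le_right _ _) (ENNReal.natCast_lt_top N))
    have e1 : ∫ ω, (min (F (X (childNode i₀ false) ω, X (childNode i₀ true) ω))
          (N : ℝ≥0∞)).toReal
        * (min (G (X (childNode j₀ false) ω, X (childNode j₀ true) ω)) (N : ℝ≥0∞)).toReal ∂m
        = (∫⁻ ω, min (F (X (childNode i₀ false) ω, X (childNode i₀ true) ω)) (N : ℝ≥0∞)
          * min (G (X (childNode j₀ false) ω, X (childNode j₀ true) ω)) (N : ℝ≥0∞) ∂m).toReal := by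
      rw [← integral_toReal (f := fun ω => min (F (X (childNode i₀ false) ω, X (childNode i₀ true) ω))
          (N : ℝ≥0∞) * min (G (X (childNode j₀ false) ω, X (childNode j₀ true) ω)) (N : ℝ≥0∞))
        (((hFpm.min measurable_const).mul
        (hGpm.min measurable_const)).aemeasurable)
        (ae_of_all _ fun ω => ENNReal.mul_lt_top
          (lt_of_le_of_lt (min_le_right _ _) (ENNReal.natCast_lt_top N))
          (lt_of_le_of_lt (min_le_right _ _) (ENNReal.natCast_lt_top N)))]
      refine integral_congr_ae (ae_of_all _ fun ω => ?_)
      exact ENNReal.toReal_mul.symm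
    have e3 : ∫ ω, ((∫⁻ yz, min (F yz) (N : ℝ≥0∞) ∂(P (X ⟨k, i₀⟩ ω))).toReal
          * (∫⁻ yz, min (G yz) (N : ℝ≥0∞) ∂(P (X ⟨k, j₀⟩ ω))).toReal) ∂m
        = (∫⁻ ω, (∫⁻ yz, min (F yz) (N : ℝ≥0∞) ∂(P (X ⟨k, i₀⟩ ω)))
            * (∫⁻ yz, min (G yz) (N : ℝ≥0∞) ∂(P (X ⟨k, j₀⟩ ω))) ∂m).toReal := by
      rw [← integral_toReal (f := fun ω => (∫⁻ yz, min (F yz) (N : ℝ≥0∞) ∂(P (X ⟨k, i₀⟩ ω)))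
          * (∫⁻ yz, min (G yz) (N : ℝ≥0∞) ∂(P (X ⟨k, j₀⟩ ω))))
        (((hinner_measF N).mul (hinner_measG N)).aemeasurable)
        (ae_of_all _ fun ω => ENNReal.mul_lt_top
          (lt_of_le_of_lt (hinner_le F N _) (ENNReal.natCast_lt_top N))
          (lt_of_le_of_lt (hinner_le G N _) (ENNReal.natCast_lt_top N)))]
      refine integral_congr_ae (ae_of_all _ fun ω => ?_)
      exact ENNReal.toReal_mul.symm
    rw [e1] at h1
    simp only [e2 F hF, e2 G hG] at h1
    rw [e3] at h1
    have hconst : ∫⁻ (_ : Ω), ((N : ℝ≥0∞) * (N : ℝ≥0∞)) ∂m = (N : ℝ≥0∞) * (N : ℝ≥0∞) := by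
      simp [lintegral_const]
    have hNN : ((N : ℝ≥0∞) * (N : ℝ≥0∞)) ≠ ⊤ :=
      ENNReal.mul_ne_top (ENNReal.natCast_ne_top N) (ENNReal.natCast_ne_top N)
    have hfin1 : ∫⁻ ω, min (F (X (childNode i₀ false) ω, X (childNode i₀ true) ω)) (N : ℝ≥0∞)
        * min (G (X (childNode j₀ false) ω, X (childNode j₀ true) ω)) (N : ℝ≥0∞) ∂m ≠ ⊤ := by
      refine ne_of_lt (lt_of_le_of_lt (lintegral_mono fun ω =>
        mul_le_mul' (min_le_right _ _) (min_le_right _ _)) ?_)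
      rw [hconst]
      exact lt_top_iff_ne_top.mpr hNN
    have hfin2 : ∫⁻ ω, (∫⁻ yz, min (F yz) (N : ℝ≥0∞) ∂(P (X ⟨k, i₀⟩ ω)))
        * (∫⁻ yz, min (G yz) (N : ℝ≥0∞) ∂(P (X ⟨k, j₀⟩ ω))) ∂m ≠ ⊤ := by
      refine ne_of_lt (lt_of_le_of_lt (lintegral_mono fun ω =>
        mul_le_mul' (hinner_le F N _) (hinner_le G N _)) ?_)
      rw [hconst]
      exact lt_top_iff_ne_top.mpr hNN
    exact (ENNReal.toReal_eq_toReal_iff' hfin1 hfin2).mp h1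
  calc ∫⁻ ω, F (X (childNode i₀ false) ω, X (childNode i₀ true) ω)
        * G (X (childNode j₀ false) ω, X (childNode j₀ true) ω) ∂m
      = ∫⁻ ω, ⨆ N : ℕ, min (F (X (childNode i₀ false) ω, X (childNode i₀ true) ω)) (N : ℝ≥0∞)
          * min (G (X (childNode j₀ false) ω, X (childNode j₀ true) ω)) (N : ℝ≥0∞) ∂m := by
        refine lintegral_congr fun ω => ?_
        rw [iSup_mul_mono (min_mono_nat _) (min_mono_nat _), iSup_min_natCast, iSup_min_natCast]
    _ = ⨆ N : ℕ, ∫⁻ ω, min (F (X (childNode i₀ false) ω, X (childNode i₀ true) ω)) (N : ℝ≥0∞)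
          * min (G (X (childNode j₀ false) ω, X (childNode j₀ true) ω)) (N : ℝ≥0∞) ∂m :=
        lintegral_iSup
          (fun N => (hFpm.min measurable_const).mul (hGpm.min measurable_const))
          (fun i j hij ω => mul_le_mul' (min_mono_nat _ hij) (min_mono_nat _ hij))
    _ = ⨆ N : ℕ, ∫⁻ ω, (∫⁻ yz, min (F yz) (N : ℝ≥0∞) ∂(P (X ⟨k, i₀⟩ ω)))
          * (∫⁻ yz, min (G yz) (N : ℝ≥0∞) ∂(P (X ⟨k, j₀⟩ ω))) ∂m := by
        simp_rw [key]
    _ = ∫⁻ ω, ⨆ N : ℕ, (∫⁻ yz, min (F yz) (N : ℝ≥0∞) ∂(P (X ⟨k, i₀⟩ ω)))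
          * (∫⁻ yz, min (G yz) (N : ℝ≥0∞) ∂(P (X ⟨k, j₀⟩ ω))) ∂m :=
        (lintegral_iSup (fun N => (hinner_measF N).mul (hinner_measG N))
          (fun i j hij ω => mul_le_mul'
            (lintegral_mono fun yz => min_mono_nat _ hij)
            (lintegral_mono fun yz => min_mono_nat _ hij))).symm
    _ = ∫⁻ ω, (∫⁻ yz, F yz ∂(P (X ⟨k, i₀⟩ ω))) * (∫⁻ yz, G yz ∂(P (X ⟨k, j₀⟩ ω))) ∂m := by
        refine lintegral_congr fun ω => ?_
        have hA : Monotone fun N : ℕ => ∫⁻ yz, min (F yz) (N : ℝ≥0∞) ∂(P (X ⟨k, i₀⟩ ω)) :=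
          fun i j hij => lintegral_mono fun yz => min_mono_nat _ hij
        have hB : Monotone fun N : ℕ => ∫⁻ yz, min (G yz) (N : ℝ≥0∞) ∂(P (X ⟨k, j₀⟩ ω)) :=
          fun i j hij => lintegral_mono fun yz => min_mono_nat _ hij
        calc (⨆ N : ℕ, (∫⁻ yz, min (F yz) (N : ℝ≥0∞) ∂(P (X ⟨k, i₀⟩ ω)))
              * (∫⁻ yz, min (G yz) (N : ℝ≥0∞) ∂(P (X ⟨k, j₀⟩ ω))))
            = (⨆ N : ℕ, ∫⁻ yz, min (F yz) (N : ℝ≥0∞) ∂(P (X ⟨k, i₀⟩ ω)))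
              * (⨆ N : ℕ, ∫⁻ yz, min (G yz) (N : ℝ≥0∞) ∂(P (X ⟨k, j₀⟩ ω))) :=
              iSup_mul_mono hA hB
          _ = (∫⁻ yz, F yz ∂(P (X ⟨k, i₀⟩ ω))) * (∫⁻ yz, G yz ∂(P (X ⟨k, j₀⟩ ω))) := by
              rw [← lintegral_iSup (fun N => hF.min measurable_const)
                (fun i j hij yz => min_mono_nat _ hij)]
              rw [← lintegral_iSup (fun N => hG.min measurable_const)
                (fun i j hij yz => min_mono_nat _ hij)]
              simp_rw [iSup_min_natCast]

def snocEquiv (k : ℕ) : (Fin k → Bool) × Bool ≃ (Fin (k + 1) → Bool) where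
  toFun p := Fin.snoc p.1 p.2
  invFun g := (fun i => g i.castSucc, g (Fin.last k))
  left_inv p := by
    refine Prod.ext ?_ ?_
    · funext i; simp [Fin.snoc_castSucc]
    · simp [Fin.snoc_last]
  right_inv g := by
    funext i
    induction i using Fin.lastCases with
    | last => simp [Fin.snoc_last]
    | cast i => simp [Fin.snoc_castSucc]

lemma sum_succ_gen (X : TreeNode → Ω → S) (f : S → ℝ≥0∞) (k : ℕ) (ω : Ω) :
    ∑ i : Fin (k + 1) → Bool, f (X ⟨k + 1, i⟩ ω)
      = ∑ i : Fin k → Bool,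
          (f (X (childNode i false) ω) + f (X (childNode i true) ω)) := by
  rw [← Equiv.sum_comp (snocEquiv k) (fun j => f (X ⟨k + 1, j⟩ ω)), Fintype.sum_prod_type]
  refine Finset.sum_congr rfl fun i _ => ?_
  rw [Fintype.sum_bool]
  simp only [snocEquiv, Equiv.coe_fn_mk, childNode]
  exact add_comm _ _

lemma step_sum (hX : IsBMC m P X) {f : S → ℝ≥0∞} (hf : Measurable f) (k : ℕ) :
    ∫⁻ ω, ∑ i : Fin (k + 1) → Bool, f (X ⟨k + 1, i⟩ ω) ∂m
      = 2 * ∫⁻ ω, ∑ i : Fin k → Bool, QL P f (X ⟨k, i⟩ ω) ∂m := by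
  have hXm := hX.1
  calc ∫⁻ ω, ∑ i : Fin (k + 1) → Bool, f (X ⟨k + 1, i⟩ ω) ∂m
      = ∫⁻ ω, ∑ i : Fin k → Bool,
          (f (X (childNode i false) ω) + f (X (childNode i true) ω)) ∂m := by
        refine lintegral_congr fun ω => sum_succ_gen X f k ω
    _ = ∑ i : Fin k → Bool, ∫⁻ ω,
          (f (X (childNode i false) ω) + f (X (childNode i true) ω)) ∂m :=
        lintegral_finset_sum _ fun i _ => (hf.comp (hXm _)).add (hf.comp (hXm _))
    _ = ∑ i : Fin k → Bool, ∫⁻ ω, ∫⁻ yz, (f yz.1 + f yz.2) ∂(P (X ⟨k, i⟩ ω)) ∂m := by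
        refine Finset.sum_congr rfl fun i _ => ?_
        exact bmc_single hX i ((hf.comp measurable_fst).add (hf.comp measurable_snd))
    _ = ∑ i : Fin k → Bool, ∫⁻ ω, 2 * QL P f (X ⟨k, i⟩ ω) ∂m := by
        refine Finset.sum_congr rfl fun i _ => lintegral_congr fun ω => lint_pair_add hf _
    _ = ∑ i : Fin k → Bool, 2 * ∫⁻ ω, QL P f (X ⟨k, i⟩ ω) ∂m := by
        refine Finset.sum_congr rfl fun i _ => lintegral_const_mul 2 ((ql_meas hf).comp (hXm _))
    _ = 2 * ∫⁻ ω, ∑ i : Fin k → Bool, QL P f (X ⟨k, i⟩ ω) ∂m := by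
        rw [← Finset.mul_sum]
        congr 1
        exact (lintegral_finset_sum _ fun i _ => (ql_meas hf).comp (hXm _)).symm

lemma root_sum (X : TreeNode → Ω → S) (f : S → ℝ≥0∞) (ω : Ω) :
    ∑ i : Fin 0 → Bool, f (X ⟨0, i⟩ ω) = f (X rootNode ω) := by
  rw [Finset.sum_eq_single (fun i : Fin 0 => i.elim0)
    (fun b _ hb => absurd (funext fun i => i.elim0) hb)
    (fun h => absurd (Finset.mem_univ _) h)]
  rfl

lemma iter_sum (hX : IsBMC m P X) :
    ∀ (n : ℕ) (f : S → ℝ≥0∞), Measurable f →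
      ∫⁻ ω, ∑ i : Fin n → Bool, f (X ⟨n, i⟩ ω) ∂m
        = 2 ^ n * ∫⁻ ω, (QL P)^[n] f (X rootNode ω) ∂m := by
  intro n
  induction n with
  | zero =>
    intro f hf
    simp only [pow_zero, one_mul, Function.iterate_zero_apply]
    exact lintegral_congr fun ω => root_sum X f ω
  | succ n ih =>
    intro f hf
    rw [step_sum hX hf n, ih (QL P f) (ql_meas hf)]
    rw [← Function.iterate_succ_apply]
    ring

lemma sec_step (hX : IsBMC m P X) {f : S → ℝ≥0∞} (hf : Measurable f) (k : ℕ) :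
    ∫⁻ ω, (∑ i : Fin (k + 1) → Bool, f (X ⟨k + 1, i⟩ ω)) ^ 2 ∂m
      ≤ 8 * ∫⁻ ω, ∑ i : Fin k → Bool, QL P (fun x => f x ^ 2) (X ⟨k, i⟩ ω) ∂m
        + 4 * ∫⁻ ω, (∑ i : Fin k → Bool, QL P f (X ⟨k, i⟩ ω)) ^ 2 ∂m := by
  have hXm := hX.1
  set h : (Fin k → Bool) → Ω → ℝ≥0∞ :=
    fun i ω => f (X (childNode i false) ω) + f (X (childNode i true) ω) with hh
  have hhm : ∀ i, Measurable (h i) := fun i => (hf.comp (hXm _)).add (hf.comp (hXm _))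
  have hFm : Measurable fun yz : S × S => f yz.1 + f yz.2 :=
    (hf.comp measurable_fst).add (hf.comp measurable_snd)
  have hexp : ∀ ω, (∑ i : Fin (k + 1) → Bool, f (X ⟨k + 1, i⟩ ω)) ^ 2
      = ∑ i : Fin k → Bool,
          (h i ω ^ 2 + ∑ j ∈ Finset.univ.erase i, h i ω * h j ω) := by
    intro ω
    rw [sum_succ_gen X f k ω]
    rw [sq, Finset.sum_mul_sum]
    refine Finset.sum_congr rfl fun i _ => ?_
    rw [← Finset.add_sum_erase _ _ (Finset.mem_univ i), sq]
  calc ∫⁻ ω, (∑ i : Fin (k + 1) → Bool, f (X ⟨k + 1, i⟩ ω)) ^ 2 ∂m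
      = ∑ i : Fin k → Bool, (∫⁻ ω, h i ω ^ 2 ∂m
          + ∑ j ∈ Finset.univ.erase i, ∫⁻ ω, h i ω * h j ω ∂m) := by
        rw [lintegral_congr hexp]
        rw [lintegral_finset_sum _ (f := fun i a => h i a ^ 2
          + ∑ j ∈ Finset.univ.erase i, h i a * h j a) fun i _ => ((hhm i).pow_const 2).add
          (Finset.measurable_sum _ fun j _ => (hhm i).mul (hhm j))]
        refine Finset.sum_congr rfl fun i _ => ?_
        rw [lintegral_add_left ((hhm i).pow_const 2)]
        rw [lintegral_finset_sum _ (f := fun j ω => h i ω * h j ω) fun j _ => (hhm i).mul (hhm j)]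
    _ ≤ ∑ i : Fin k → Bool, (∫⁻ ω, 8 * QL P (fun x => f x ^ 2) (X ⟨k, i⟩ ω) ∂m
          + ∑ j ∈ Finset.univ, ∫⁻ ω,
            (2 * QL P f (X ⟨k, i⟩ ω)) * (2 * QL P f (X ⟨k, j⟩ ω)) ∂m) := by
        refine Finset.sum_le_sum fun i _ => add_le_add ?_ ?_
        · -- diagonal term
          have h1 : ∫⁻ ω, h i ω ^ 2 ∂m
              = ∫⁻ ω, ∫⁻ yz, (f yz.1 + f yz.2) ^ 2 ∂(P (X ⟨k, i⟩ ω)) ∂m :=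
            bmc_single hX i (hFm.pow_const 2)
          rw [h1]
          refine le_trans (lintegral_mono fun ω => ?_) le_rfl
          calc ∫⁻ yz, (f yz.1 + f yz.2) ^ 2 ∂(P (X ⟨k, i⟩ ω))
              ≤ ∫⁻ yz, 4 * (f yz.1 ^ 2 + f yz.2 ^ 2) ∂(P (X ⟨k, i⟩ ω)) :=
                lintegral_mono fun yz => add_sq_le4 _ _
            _ = 4 * ∫⁻ yz, ((fun x => f x ^ 2) yz.1 + (fun x => f x ^ 2) yz.2)
                  ∂(P (X ⟨k, i⟩ ω)) :=
                lintegral_const_mul 4 (((hf.comp measurable_fst).pow_const 2).add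
                  ((hf.comp measurable_snd).pow_const 2))
            _ = 4 * (2 * QL P (fun x => f x ^ 2) (X ⟨k, i⟩ ω)) := by
                rw [lint_pair_add (hf.pow_const 2)]
            _ = 8 * QL P (fun x => f x ^ 2) (X ⟨k, i⟩ ω) := by ring
        · -- off-diagonal terms
          refine le_trans (Finset.sum_le_sum fun j hj => le_of_eq ?_)
            (Finset.sum_le_sum_of_subset (Finset.erase_subset _ _))
          have hij : i ≠ j := (Finset.ne_of_mem_erase hj).symm
          have h2 := bmc_pair hX hij hFm hFm
          calc ∫⁻ ω, h i ω * h j ω ∂m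
              = ∫⁻ ω, (∫⁻ yz, (f yz.1 + f yz.2) ∂(P (X ⟨k, i⟩ ω)))
                  * (∫⁻ yz, (f yz.1 + f yz.2) ∂(P (X ⟨k, j⟩ ω))) ∂m := h2
            _ = ∫⁻ ω, (2 * QL P f (X ⟨k, i⟩ ω)) * (2 * QL P f (X ⟨k, j⟩ ω)) ∂m := by
                refine lintegral_congr fun ω => ?_
                rw [lint_pair_add hf, lint_pair_add hf]
    _ = 8 * ∫⁻ ω, ∑ i : Fin k → Bool, QL P (fun x => f x ^ 2) (X ⟨k, i⟩ ω) ∂m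
          + 4 * ∫⁻ ω, (∑ i : Fin k → Bool, QL P f (X ⟨k, i⟩ ω)) ^ 2 ∂m := by
        rw [Finset.sum_add_distrib]
        congr 1
        · calc ∑ i : Fin k → Bool, ∫⁻ ω, 8 * QL P (fun x => f x ^ 2) (X ⟨k, i⟩ ω) ∂m
              = ∑ i : Fin k → Bool, 8 * ∫⁻ ω, QL P (fun x => f x ^ 2) (X ⟨k, i⟩ ω) ∂m :=
                Finset.sum_congr rfl fun i _ =>
                  lintegral_const_mul 8 ((ql_meas (hf.pow_const 2)).comp (hXm _))
            _ = 8 * ∑ i : Fin k → Bool, ∫⁻ ω, QL P (fun x => f x ^ 2) (X ⟨k, i⟩ ω) ∂m :=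
                (Finset.mul_sum _ _ _).symm
            _ = 8 * ∫⁻ ω, ∑ i : Fin k → Bool, QL P (fun x => f x ^ 2) (X ⟨k, i⟩ ω) ∂m := by
                congr 1
                exact (lintegral_finset_sum _ fun i _ =>
                  (ql_meas (hf.pow_const 2)).comp (hXm _)).symm
        · have hqm : ∀ i : Fin k → Bool, Measurable fun ω => QL P f (X ⟨k, i⟩ ω) :=
            fun i => (ql_meas hf).comp (hXm _)
          have : ∀ ω, (∑ i : Fin k → Bool, QL P f (X ⟨k, i⟩ ω)) ^ 2
              = ∑ i : Fin k → Bool, ∑ j : Fin k → Bool,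
                  QL P f (X ⟨k, i⟩ ω) * QL P f (X ⟨k, j⟩ ω) := by
            intro ω; rw [sq, Finset.sum_mul_sum]
          calc ∑ i : Fin k → Bool, ∑ j : Fin k → Bool, ∫⁻ ω,
                (2 * QL P f (X ⟨k, i⟩ ω)) * (2 * QL P f (X ⟨k, j⟩ ω)) ∂m
              = ∑ i : Fin k → Bool, ∑ j : Fin k → Bool, 4 * ∫⁻ ω,
                  QL P f (X ⟨k, i⟩ ω) * QL P f (X ⟨k, j⟩ ω) ∂m := by
                refine Finset.sum_congr rfl fun i _ => Finset.sum_congr rfl fun j _ => ?_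
                rw [← lintegral_const_mul 4 (f := fun ω => QL P f (X ⟨k, i⟩ ω) * QL P f (X ⟨k, j⟩ ω))
                    ((hqm i).mul (hqm j))]
                refine lintegral_congr fun ω => ?_
                ring
            _ = 4 * ∑ i : Fin k → Bool, ∑ j : Fin k → Bool, ∫⁻ ω,
                  QL P f (X ⟨k, i⟩ ω) * QL P f (X ⟨k, j⟩ ω) ∂m := by
                rw [Finset.mul_sum]
                exact Finset.sum_congr rfl fun i _ => (Finset.mul_sum _ _ _).symm
            _ = 4 * ∫⁻ ω, (∑ i : Fin k → Bool, QL P f (X ⟨k, i⟩ ω)) ^ 2 ∂m := by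
                congr 1
                rw [lintegral_congr this]
                rw [lintegral_finset_sum _ (f := fun i ω => ∑ j : Fin k → Bool,
                    QL P f (X ⟨k, i⟩ ω) * QL P f (X ⟨k, j⟩ ω)) fun i _ =>
                  Finset.measurable_sum _ fun j _ => (hqm i).mul (hqm j)]
                exact Finset.sum_congr rfl fun i _ =>
                  (lintegral_finset_sum _ fun j _ => (hqm i).mul (hqm j)).symm

end AuxBMC


section Main
variable {S Ω : Type*} [MeasurableSpace S] [MeasurableSpace Ω]
  {m : Measure Ω} [IsProbabilityMeasure m] {P : Kernel S (S × S)} [IsMarkovKernel P]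
  {X : TreeNode → Ω → S} {μ : Measure S}

lemma inv_iter (hinv : QInvariant P μ) :
    ∀ (d : ℕ) (f : S → ℝ≥0∞), Measurable f →
      ∫⁻ x, (QL P)^[d] f x ∂μ = ∫⁻ x, f x ∂μ := by
  intro d
  induction d with
  | zero => intro f hf; simp
  | succ d ih =>
    intro f hf
    rw [show (QL P)^[d + 1] f = (QL P)^[d] (QL P f) from Function.iterate_succ_apply _ _ _]
    rw [ih (QL P f) (ql_meas hf), hinv f hf]

theorem stmt8x
    (hX : IsBMC m P X) [IsProbabilityMeasure μ] (hinv : QInvariant P μ)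
    (k₀ : ℕ) (ν₀ : S → ℝ≥0∞) (hν₀m : Measurable ν₀)
    (hν₀b : ∃ c : ℝ≥0∞, c ≠ ⊤ ∧ ∀ y, ν₀ y ≤ c)
    (hdens : ∀ f : S → ℝ≥0∞, Measurable f →
      ∫⁻ ω, (QL P)^[k₀] f (X rootNode ω) ∂m = ∫⁻ y, ν₀ y * f y ∂μ) :
    ∃ C : ℝ≥0∞, C ≠ ⊤ ∧ ∀ f : S → ℝ≥0∞, Measurable f → ∀ n, k₀ ≤ n →
      (∫⁻ ω, ∑ i : Fin n → Bool, f (X ⟨n, i⟩ ω) ∂m) / 2 ^ n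
          ≤ C * ∫⁻ y, f y ∂μ
      ∧ (∫⁻ ω, (∑ i : Fin n → Bool, f (X ⟨n, i⟩ ω)) ^ 2 ∂m) / 2 ^ n
          ≤ C * ∑ k ∈ Finset.range (n + 1), 2 ^ k * ∫⁻ y, ((QL P)^[k] f y) ^ 2 ∂μ := by
  obtain ⟨c, hc_ne, hc⟩ := hν₀b
  -- first moment identity at generation k₀ + d
  have fm : ∀ (d : ℕ) (f : S → ℝ≥0∞), Measurable f →
      ∫⁻ ω, ∑ i : Fin (k₀ + d) → Bool, f (X ⟨k₀ + d, i⟩ ω) ∂m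
        = 2 ^ (k₀ + d) * ∫⁻ y, ν₀ y * (QL P)^[d] f y ∂μ := by
    intro d f hf
    rw [iter_sum hX (k₀ + d) f hf]
    congr 1
    rw [show (QL P)^[k₀ + d] f = (QL P)^[k₀] ((QL P)^[d] f) from
      Function.iterate_add_apply _ _ _ _]
    exact hdens _ (ql_iter_meas hf d)
  -- density bound
  have dbound : ∀ (g : S → ℝ≥0∞), Measurable g →
      ∫⁻ y, ν₀ y * g y ∂μ ≤ c * ∫⁻ y, g y ∂μ := by
    intro g hg
    rw [← lintegral_const_mul c hg]
    exact lintegral_mono fun y => mul_le_mul_left (hc y) _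
  -- constants
  set K : ℝ≥0∞ := (2 * 4 ^ k₀ + 4) * c with hK
  have hKc : 4 * c ≤ K := by
    rw [hK]
    exact mul_le_mul_left (le_add_self) c
  have hKb : 2 * 2 ^ k₀ * c ≤ K := by
    rw [hK]
    refine mul_le_mul_left (le_trans ?_ le_self_add) c
    have : (2 : ℝ≥0∞) ^ k₀ ≤ 4 ^ k₀ := pow_le_pow_left' (by norm_num) k₀
    exact mul_le_mul_right this 2
  set C : ℝ≥0∞ := K + c with hC
  have hC_ne : C ≠ ⊤ := by
    rw [hC, hK]
    refine ENNReal.add_ne_top.mpr ⟨ENNReal.mul_ne_top ?_ hc_ne, hc_ne⟩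
    refine ENNReal.add_ne_top.mpr ⟨ENNReal.mul_ne_top (by norm_num) ?_, by norm_num⟩
    exact ENNReal.pow_ne_top (by norm_num)
  have hKC : K ≤ C := le_self_add
  have hcC : c ≤ C := le_add_self
  -- second moment master bound
  have master : ∀ (d : ℕ) (f : S → ℝ≥0∞), Measurable f →
      ∫⁻ ω, (∑ i : Fin (k₀ + d) → Bool, f (X ⟨k₀ + d, i⟩ ω)) ^ 2 ∂m
        ≤ K * 2 ^ (k₀ + d)
            * ∑ j ∈ Finset.range (d + 1), 2 ^ j * ∫⁻ y, ((QL P)^[j] f y) ^ 2 ∂μ := by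
    intro d
    induction d with
    | zero =>
      intro f hf
      have hcard : (Fintype.card (Fin (k₀ + 0) → Bool) : ℝ≥0∞) = 2 ^ k₀ := by
        simp [Fintype.card_fun]
      calc ∫⁻ ω, (∑ i : Fin (k₀ + 0) → Bool, f (X ⟨k₀ + 0, i⟩ ω)) ^ 2 ∂m
          ≤ ∫⁻ ω, (2 * Fintype.card (Fin (k₀ + 0) → Bool))
              * ∑ i : Fin (k₀ + 0) → Bool, f (X ⟨k₀ + 0, i⟩ ω) ^ 2 ∂m :=
            lintegral_mono fun ω => sq_sum_le _
        _ = (2 * 2 ^ k₀) * ∫⁻ ω, ∑ i : Fin (k₀ + 0) → Bool,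
              (fun x => f x ^ 2) (X ⟨k₀ + 0, i⟩ ω) ∂m := by
            rw [hcard]
            exact lintegral_const_mul _ (Finset.measurable_sum _ fun i _ =>
              (hf.pow_const 2).comp (hX.1 _))
        _ = (2 * 2 ^ k₀) * (2 ^ (k₀ + 0) * ∫⁻ y, ν₀ y * (QL P)^[0] (fun x => f x ^ 2) y ∂μ) := by
            rw [fm 0 (fun x => f x ^ 2) (hf.pow_const 2)]
        _ ≤ (2 * 2 ^ k₀) * (2 ^ (k₀ + 0) * (c * ∫⁻ y, f y ^ 2 ∂μ)) := by
            refine mul_le_mul' le_rfl (mul_le_mul' le_rfl ?_)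
            exact dbound (fun x => f x ^ 2) (hf.pow_const 2)
        _ ≤ K * 2 ^ (k₀ + 0)
              * ∑ j ∈ Finset.range (0 + 1), 2 ^ j * ∫⁻ y, ((QL P)^[j] f y) ^ 2 ∂μ := by
            simp only [Finset.sum_range_succ, Finset.sum_range_zero, zero_add, pow_zero,
              one_mul, Function.iterate_zero_apply]
            calc (2 * 2 ^ k₀) * (2 ^ (k₀ + 0) * (c * ∫⁻ y, f y ^ 2 ∂μ))
                = (2 * 2 ^ k₀ * c) * (2 ^ (k₀ + 0) * ∫⁻ y, f y ^ 2 ∂μ) := by ring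
              _ ≤ K * (2 ^ (k₀ + 0) * ∫⁻ y, f y ^ 2 ∂μ) := mul_le_mul_left hKb _
              _ = K * 2 ^ (k₀ + 0) * ∫⁻ y, f y ^ 2 ∂μ := by ring
    | succ d ih =>
      intro f hf
      have hstep := sec_step hX hf (k₀ + d)
      have hT1 : ∫⁻ ω, ∑ i : Fin (k₀ + d) → Bool,
            QL P (fun x => f x ^ 2) (X ⟨k₀ + d, i⟩ ω) ∂m
          ≤ 2 ^ (k₀ + d) * (c * ∫⁻ y, f y ^ 2 ∂μ) := by
        rw [fm d _ (ql_meas (hf.pow_const 2))]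
        refine mul_le_mul' le_rfl ?_
        calc ∫⁻ y, ν₀ y * (QL P)^[d] (QL P (fun x => f x ^ 2)) y ∂μ
            ≤ c * ∫⁻ y, (QL P)^[d] (QL P (fun x => f x ^ 2)) y ∂μ :=
              dbound _ (ql_iter_meas (ql_meas (hf.pow_const 2)) d)
          _ = c * ∫⁻ y, f y ^ 2 ∂μ := by
              rw [← Function.iterate_succ_apply]
              rw [inv_iter hinv (d + 1) _ (hf.pow_const 2)]
      have hT2 := ih (QL P f) (ql_meas hf)
      have hT2' : ∫⁻ ω, (∑ i : Fin (k₀ + d) → Bool, QL P f (X ⟨k₀ + d, i⟩ ω)) ^ 2 ∂m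
          ≤ K * 2 ^ (k₀ + d)
            * ∑ j ∈ Finset.range (d + 1), 2 ^ j * ∫⁻ y, ((QL P)^[j + 1] f y) ^ 2 ∂μ := by
        exact hT2
      calc ∫⁻ ω, (∑ i : Fin (k₀ + (d + 1)) → Bool, f (X ⟨k₀ + (d + 1), i⟩ ω)) ^ 2 ∂m
          ≤ 8 * ∫⁻ ω, ∑ i : Fin (k₀ + d) → Bool,
                QL P (fun x => f x ^ 2) (X ⟨k₀ + d, i⟩ ω) ∂m
              + 4 * ∫⁻ ω, (∑ i : Fin (k₀ + d) → Bool, QL P f (X ⟨k₀ + d, i⟩ ω)) ^ 2 ∂m :=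
            hstep
        _ ≤ 8 * (2 ^ (k₀ + d) * (c * ∫⁻ y, f y ^ 2 ∂μ))
              + 4 * (K * 2 ^ (k₀ + d)
                * ∑ j ∈ Finset.range (d + 1), 2 ^ j * ∫⁻ y, ((QL P)^[j + 1] f y) ^ 2 ∂μ) :=
            add_le_add (mul_le_mul' le_rfl hT1) (mul_le_mul' le_rfl hT2')
        _ = 4 * (K * 2 ^ (k₀ + d)
                * ∑ j ∈ Finset.range (d + 1), 2 ^ j * ∫⁻ y, ((QL P)^[j + 1] f y) ^ 2 ∂μ)
              + 8 * (2 ^ (k₀ + d) * (c * ∫⁻ y, f y ^ 2 ∂μ)) := add_comm _ _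
        _ ≤ K * 2 ^ (k₀ + (d + 1))
              * ∑ j ∈ Finset.range (d + 1 + 1), 2 ^ j * ∫⁻ y, ((QL P)^[j] f y) ^ 2 ∂μ := by
            conv_rhs => rw [Finset.sum_range_succ']
            rw [mul_add]
            simp only [pow_zero, one_mul, Function.iterate_zero_apply]
            refine add_le_add ?_ ?_
            · -- reindexed part
              refine le_of_eq ?_
              rw [Finset.mul_sum, Finset.mul_sum, Finset.mul_sum]
              refine Finset.sum_congr rfl fun j _ => ?_
              rw [show k₀ + (d + 1) = (k₀ + d) + 1 from rfl]
              rw [pow_succ ((2 : ℝ≥0∞)) (k₀ + d), pow_succ ((2 : ℝ≥0∞)) j]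
              ring
            · calc 8 * (2 ^ (k₀ + d) * (c * ∫⁻ y, f y ^ 2 ∂μ))
                  = (4 * c) * (2 ^ (k₀ + (d + 1)) * ∫⁻ y, f y ^ 2 ∂μ) := by
                    rw [show k₀ + (d + 1) = (k₀ + d) + 1 from rfl,
                      pow_succ ((2 : ℝ≥0∞)) (k₀ + d)]
                    ring
                _ ≤ K * (2 ^ (k₀ + (d + 1)) * ∫⁻ y, f y ^ 2 ∂μ) := mul_le_mul_left hKc _
                _ = K * 2 ^ (k₀ + (d + 1)) * ∫⁻ y, f y ^ 2 ∂μ := by ring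
  -- conclusion
  refine ⟨C, hC_ne, fun f hf n hn => ?_⟩
  obtain ⟨d, rfl⟩ : ∃ d, n = k₀ + d := ⟨n - k₀, (Nat.add_sub_cancel' hn).symm⟩
  have h2n0 : (2 : ℝ≥0∞) ^ (k₀ + d) ≠ 0 := pow_ne_zero _ (by norm_num)
  have h2nt : (2 : ℝ≥0∞) ^ (k₀ + d) ≠ ⊤ := ENNReal.pow_ne_top (by norm_num)
  constructor
  · rw [ENNReal.div_le_iff h2n0 h2nt]
    calc ∫⁻ ω, ∑ i : Fin (k₀ + d) → Bool, f (X ⟨k₀ + d, i⟩ ω) ∂m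
        = 2 ^ (k₀ + d) * ∫⁻ y, ν₀ y * (QL P)^[d] f y ∂μ := fm d f hf
      _ ≤ 2 ^ (k₀ + d) * (c * ∫⁻ y, (QL P)^[d] f y ∂μ) :=
          mul_le_mul' le_rfl (dbound _ (ql_iter_meas hf d))
      _ = 2 ^ (k₀ + d) * (c * ∫⁻ y, f y ∂μ) := by rw [inv_iter hinv d f hf]
      _ ≤ C * (∫⁻ y, f y ∂μ) * 2 ^ (k₀ + d) := by
          rw [mul_comm ((2 : ℝ≥0∞) ^ (k₀ + d)) _]
          exact mul_le_mul_left (mul_le_mul_left hcC _) _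
  · rw [ENNReal.div_le_iff h2n0 h2nt]
    calc ∫⁻ ω, (∑ i : Fin (k₀ + d) → Bool, f (X ⟨k₀ + d, i⟩ ω)) ^ 2 ∂m
        ≤ K * 2 ^ (k₀ + d)
            * ∑ j ∈ Finset.range (d + 1), 2 ^ j * ∫⁻ y, ((QL P)^[j] f y) ^ 2 ∂μ :=
          master d f hf
      _ ≤ C * 2 ^ (k₀ + d)
            * ∑ j ∈ Finset.range (k₀ + d + 1), 2 ^ j * ∫⁻ y, ((QL P)^[j] f y) ^ 2 ∂μ := by
          refine mul_le_mul' (mul_le_mul_left hKC _) ?_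
          refine Finset.sum_le_sum_of_subset ?_
          exact Finset.range_subset_range.mpr (by omega)
      _ = C * (∑ j ∈ Finset.range (k₀ + d + 1), 2 ^ j * ∫⁻ y, ((QL P)^[j] f y) ^ 2 ∂μ)
            * 2 ^ (k₀ + d) := by ring

end Main


/-- If the law `ν Q^{k₀}` of the chain after `k₀` steps has a bounded density `ν₀`
with respect to the `Q`-invariant probability measure `μ`, then there is a finite
constant `C` with, for all non-negative measurable `f` and all `n ≥ k₀`:
`2^{-n} E[M_{G_n}(f)] ≤ C ‖f‖_{L¹(μ)}` and
`2^{-n} E[M_{G_n}(f)²] ≤ C ∑_{k=0}^{n} 2^k ‖Q^k f‖²_{L²(μ)}`. -/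
theorem stmt8 {S Ω : Type*} [MeasurableSpace S] [MeasurableSpace Ω]
    (m : Measure Ω) [IsProbabilityMeasure m]
    (P : Kernel S (S × S)) [IsMarkovKernel P]
    (X : TreeNode → Ω → S) (hX : IsBMC m P X)
    (μ : Measure S) [IsProbabilityMeasure μ] (hinv : QInvariant P μ)
    (k₀ : ℕ) (ν₀ : S → ℝ≥0∞) (hν₀m : Measurable ν₀) (hν₀b : ∃ c : ℝ≥0∞, c ≠ ⊤ ∧ ∀ y, ν₀ y ≤ c)
    (hdens : ∀ f : S → ℝ≥0∞, Measurable f →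
      ∫⁻ ω, (QL P)^[k₀] f (X rootNode ω) ∂m = ∫⁻ y, ν₀ y * f y ∂μ) :
    ∃ C : ℝ≥0∞, C ≠ ⊤ ∧ ∀ f : S → ℝ≥0∞, Measurable f → ∀ n, k₀ ≤ n →
      (∫⁻ ω, ∑ i : Fin n → Bool, f (X ⟨n, i⟩ ω) ∂m) / 2 ^ n
          ≤ C * ∫⁻ y, f y ∂μ
      ∧ (∫⁻ ω, (∑ i : Fin n → Bool, f (X ⟨n, i⟩ ω)) ^ 2 ∂m) / 2 ^ n
          ≤ C * ∑ k ∈ Finset.range (n + 1), 2 ^ k * ∫⁻ y, ((QL P)^[k] f y) ^ 2 ∂μ := by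
  exact stmt8x hX hinv k₀ ν₀ hν₀m hν₀b hdens
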